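/- arXiv:1604.00636 — 6 statements merged into one kernel-verified Lean document; each statement's English description precedes it below -/
import Mathlib

section
/- Let X ~ Exp(mean p₀) and Y₁,...,Y_n independent with Y_i ~ Exp(mean p_i), all independent of X, and σ² > 0. Then for x ≥ 0, P[X/(∑_i Y_i + σ²) ≤ x] = 1 − e^{−xσ²/p₀} ∏_{i=1}^n a_i/(a_i + x), where a_i = p₀/p_i. -/
open MeasureTheory ProbabilityTheory Real Finset

lemma sinr_expMeasure_eq (r : ℝ) :
    expMeasure r = MeasureTheory.volume.withDensity (exponentialPDF r) := rfl

lemma sinr_expMeasure_Iic (r t : ℝ) (hr : 0 < r) :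
    expMeasure r (Set.Iic t)
      = ENNReal.ofReal (if 0 ≤ t then 1 - Real.exp (-(r * t)) else 0) := by
  rw [sinr_expMeasure_eq, withDensity_apply _ measurableSet_Iic,
    lintegral_exponentialPDF_eq_antiDeriv hr]

lemma sinr_ae_nonneg {Ω : Type*} [MeasurableSpace Ω] {P : Measure Ω} {X : Ω → ℝ} {r : ℝ}
    (hX : Measurable X) (hd : Measure.map X P = expMeasure r) :
    ∀ᵐ ω ∂P, 0 ≤ X ω := by
  have h0 : P {ω | X ω < 0} = 0 := by
    have : {ω | X ω < 0} = X ⁻¹' Set.Iio 0 := rfl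
    rw [this, ← Measure.map_apply hX measurableSet_Iio, hd, sinr_expMeasure_eq,
      withDensity_apply _ measurableSet_Iio, lintegral_exponentialPDF_of_nonpos le_rfl]
  filter_upwards [measure_eq_zero_iff_ae_notMem.mp h0] with ω h
  simpa using not_lt.mp h

lemma sinr_laplace_exp {r c : ℝ} (hr : 0 < r) (hc : 0 ≤ c) :
    ∫⁻ b, ENNReal.ofReal (Real.exp (-(c * b))) ∂(expMeasure r)
      = ENNReal.ofReal (r / (r + c)) := by
  have hrc : 0 < r + c := by linarith
  have hmeas : Measurable fun b : ℝ => ENNReal.ofReal (Real.exp (-(c * b))) := by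
    fun_prop
  have hpdf : Measurable (exponentialPDF r) :=
    (measurable_exponentialPDFReal r).ennreal_ofReal
  rw [sinr_expMeasure_eq,
    lintegral_withDensity_eq_lintegral_mul (f := exponentialPDF r) _ hpdf hmeas]
  have hpt : (exponentialPDF r * fun b => ENNReal.ofReal (Real.exp (-(c * b))))
      = fun b => ENNReal.ofReal (r / (r + c)) * exponentialPDF (r + c) b := by
    funext b
    simp only [Pi.mul_apply]
    rcases lt_or_ge b 0 with hb | hb
    · rw [exponentialPDF_of_neg hb, exponentialPDF_of_neg hb, zero_mul, mul_zero]
    · rw [exponentialPDF_of_nonneg hb, exponentialPDF_of_nonneg hb,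
        ← ENNReal.ofReal_mul (by positivity), ← ENNReal.ofReal_mul (by positivity)]
      congr 1
      have : -((r + c) * b) = -(r * b) + -(c * b) := by ring
      rw [this, Real.exp_add]
      field_simp
  rw [hpt]
  simp only []
  calc ∫⁻ a, ENNReal.ofReal (r / (r + c)) * exponentialPDF (r + c) a
      = ENNReal.ofReal (r / (r + c)) * ∫⁻ a, exponentialPDF (r + c) a :=
        lintegral_const_mul _ ((measurable_exponentialPDFReal (r + c)).ennreal_ofReal)
    _ = ENNReal.ofReal (r / (r + c)) := by rw [lintegral_exponentialPDF_eq_one hrc, mul_one]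

lemma sinr_lintegral_prod {Ω : Type*} [MeasurableSpace Ω] {P : Measure Ω}
    {ι : Type*} {f : ι → Ω → ℝ}
    (hindep : iIndepFun f P) (hf : ∀ i, Measurable (f i))
    (g : ι → ℝ → ENNReal) (hg : ∀ i, Measurable (g i)) (s : Finset ι) :
    ∫⁻ ω, ∏ i ∈ s, g i (f i ω) ∂P = ∏ i ∈ s, ∫⁻ ω, g i (f i ω) ∂P := by
  classical
  haveI : IsProbabilityMeasure P := hindep.isProbabilityMeasure
  induction s using Finset.induction_on with
  | empty => simp
  | @insert j s hj ih =>
    have hFin : IndepFun (fun ω => g j (f j ω)) (fun ω => ∏ i ∈ s, g i (f i ω)) P := by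
      have h1 := hindep.indepFun_finset {j} s (by simpa using hj) hf
      have h2 := h1.comp
        (φ := fun v : ({j} : Finset ι) → ℝ => g j (v ⟨j, Finset.mem_singleton_self j⟩))
        (ψ := fun v : {x // x ∈ s} → ℝ => ∏ i ∈ s.attach, g i.1 (v i))
        ((hg j).comp (measurable_pi_apply _))
        (Finset.measurable_prod _ fun i _ => (hg i).comp (measurable_pi_apply _))
      convert h2 using 1
      funext ω
      simp only [Function.comp]
      funext ω; exact (Finset.prod_attach s (fun i => g i (f i ω))).symm
    simp only [Finset.prod_insert hj]
    have := lintegral_mul_eq_lintegral_mul_lintegral_of_indepFun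
      (μ := P) (f := fun ω => g j (f j ω)) (g := fun ω => ∏ i ∈ s, g i (f i ω))
      ((hg j).comp (hf j))
      (Finset.measurable_prod _ fun i _ => (hg i).comp (hf i)) hFin
    calc ∫⁻ ω, g j (f j ω) * ∏ i ∈ s, g i (f i ω) ∂P
        = (∫⁻ ω, g j (f j ω) ∂P) * ∫⁻ ω, ∏ i ∈ s, g i (f i ω) ∂P := this
      _ = (∫⁻ ω, g j (f j ω) ∂P) * ∏ i ∈ s, ∫⁻ ω, g i (f i ω) ∂P := by rw [ih]

theorem sinr_cdf_many_interferers
    {Ω : Type*} [MeasurableSpace Ω] (P : Measure Ω) [IsProbabilityMeasure P]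
    (n : ℕ) (f : Fin (n + 1) → Ω → ℝ) (hf : ∀ i, Measurable (f i))
    (p₀ : ℝ) (p : Fin n → ℝ) (σ2 : ℝ)
    (hp₀ : 0 < p₀) (hp : ∀ i, 0 < p i) (hσ : 0 < σ2)
    (hXd : Measure.map (f 0) P = expMeasure (1 / p₀))
    (hYd : ∀ i : Fin n, Measure.map (f i.succ) P = expMeasure (1 / p i))
    (hindep : iIndepFun f P)
    (x : ℝ) (hx : 0 ≤ x) :
    P {ω | f 0 ω / ((∑ i : Fin n, f i.succ ω) + σ2) ≤ x}
      = ENNReal.ofReal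
          (1 - Real.exp (-x * σ2 / p₀) * ∏ i : Fin n, (p₀ / p i) / (p₀ / p i + x)) := by
  classical
  have hr₀ : (0:ℝ) < 1 / p₀ := by positivity
  set c : ℝ := x / p₀ with hcdef
  have hc : 0 ≤ c := by positivity
  set S : Ω → ℝ := fun ω => ∑ i : Fin n, f i.succ ω with hSdef
  have hS : Measurable S := Finset.measurable_sum _ fun i _ => hf i.succ
  have hX : Measurable (f 0) := hf 0
  have hS0 : ∀ᵐ ω ∂P, 0 ≤ S ω := by
    have h : ∀ᵐ ω ∂P, ∀ i : Fin n, 0 ≤ f i.succ ω :=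
      ae_all_iff.2 fun i => sinr_ae_nonneg (hf i.succ) (hYd i)
    filter_upwards [h] with ω hω
    exact Finset.sum_nonneg fun i _ => hω i
  have hEvent : P {ω | f 0 ω / (S ω + σ2) ≤ x} = P {ω | f 0 ω ≤ x * (S ω + σ2)} := by
    apply measure_congr
    rw [Filter.eventuallyEq_set]
    filter_upwards [hS0] with ω h0
    exact div_le_iff₀ (by linarith)
  have hind : IndepFun S (f 0) P := by
    have h := hindep.indepFun_finsetSum_of_notMem hf
      (s := Finset.univ.image Fin.succ) (i := (0 : Fin (n+1)))
      (by simp [Fin.succ_ne_zero])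
    have hfs : (∑ j ∈ Finset.univ.image Fin.succ, f j) = S := by
      funext ω
      rw [Finset.sum_apply, Finset.sum_image (fun i _ j _ h => Fin.succ_injective n h)]
    rwa [hfs] at h
  haveI hPX : IsProbabilityMeasure (Measure.map (f 0) P) := by
    rw [hXd]; exact isProbabilityMeasure_expMeasure hr₀
  haveI hPS : IsProbabilityMeasure (Measure.map S P) :=
    Measure.isProbabilityMeasure_map hS.aemeasurable
  have hjoint := (indepFun_iff_map_prod_eq_prod_map_map hS.aemeasurable hX.aemeasurable).mp hind
  have hT : MeasurableSet {q : ℝ × ℝ | q.2 ≤ x * (q.1 + σ2)} := by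
    apply measurableSet_le measurable_snd
    fun_prop
  have step1 : P {ω | f 0 ω ≤ x * (S ω + σ2)}
      = ∫⁻ b, (Measure.map (f 0) P) (Set.Iic (x * (b + σ2))) ∂(Measure.map S P) := by
    have hpre : {ω | f 0 ω ≤ x * (S ω + σ2)}
        = (fun ω => (S ω, f 0 ω)) ⁻¹' {q : ℝ × ℝ | q.2 ≤ x * (q.1 + σ2)} := rfl
    rw [hpre, ← Measure.map_apply (hS.prodMk hX) hT, hjoint, Measure.prod_apply hT]
    refine lintegral_congr fun b => ?_
    have hset : (Prod.mk b ⁻¹' {q : ℝ × ℝ | q.2 ≤ x * (q.1 + σ2)})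
        = Set.Iic (x * (b + σ2)) := by
      ext a; simp [Set.mem_setOf_eq]
    rw [hset]
  have hb0 : ∀ᵐ b ∂(Measure.map S P), 0 ≤ b :=
    (MeasureTheory.ae_map_iff hS.aemeasurable measurableSet_Ici).2 hS0
  have step2 : ∫⁻ b, (Measure.map (f 0) P) (Set.Iic (x * (b + σ2))) ∂(Measure.map S P)
      = ∫⁻ b, (1 - ENNReal.ofReal (Real.exp (-(c * σ2)))
          * ENNReal.ofReal (Real.exp (-(c * b)))) ∂(Measure.map S P) := by
    apply lintegral_congr_ae
    filter_upwards [hb0] with b hb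
    rw [hXd, sinr_expMeasure_Iic _ _ hr₀, if_pos (by positivity)]
    have he : -(1 / p₀ * (x * (b + σ2))) = -(c * σ2) + -(c * b) := by
      rw [hcdef]; field_simp; ring
    rw [he, Real.exp_add, ENNReal.ofReal_sub _ (by positivity), ENNReal.ofReal_one,
      ENNReal.ofReal_mul (Real.exp_pos _).le]
  have hg1 : ∀ᵐ b ∂(Measure.map S P), ENNReal.ofReal (Real.exp (-(c * σ2)))
      * ENNReal.ofReal (Real.exp (-(c * b))) ≤ 1 := by
    filter_upwards [hb0] with b hb
    have h1 : ENNReal.ofReal (Real.exp (-(c * σ2))) ≤ 1 :=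
      ENNReal.ofReal_le_one.2 (Real.exp_le_one_iff.2 (neg_nonpos.2 (by positivity)))
    have h2 : ENNReal.ofReal (Real.exp (-(c * b))) ≤ 1 :=
      ENNReal.ofReal_le_one.2 (Real.exp_le_one_iff.2 (neg_nonpos.2 (by positivity)))
    exact mul_le_one' h1 h2
  have hgmeas : Measurable fun b : ℝ => ENNReal.ofReal (Real.exp (-(c * σ2)))
      * ENNReal.ofReal (Real.exp (-(c * b))) := by fun_prop
  have hgfin : ∫⁻ b, (ENNReal.ofReal (Real.exp (-(c * σ2)))
      * ENNReal.ofReal (Real.exp (-(c * b)))) ∂(Measure.map S P) ≠ ⊤ := by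
    have hle : ∫⁻ b, (ENNReal.ofReal (Real.exp (-(c * σ2)))
        * ENNReal.ofReal (Real.exp (-(c * b)))) ∂(Measure.map S P)
        ≤ ∫⁻ _, 1 ∂(Measure.map S P) := lintegral_mono_ae hg1
    rw [lintegral_one, measure_univ] at hle
    exact (hle.trans_lt ENNReal.one_lt_top).ne
  have step3 : ∫⁻ b, (1 - ENNReal.ofReal (Real.exp (-(c * σ2)))
      * ENNReal.ofReal (Real.exp (-(c * b)))) ∂(Measure.map S P)
      = 1 - ENNReal.ofReal (Real.exp (-(c * σ2)))
          * ∫⁻ b, ENNReal.ofReal (Real.exp (-(c * b))) ∂(Measure.map S P) := by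
    rw [lintegral_sub hgmeas hgfin hg1, lintegral_one, measure_univ,
      lintegral_const_mul _ (by fun_prop : Measurable fun b : ℝ =>
        ENNReal.ofReal (Real.exp (-(c * b))))]
  have hM : ∫⁻ b, ENNReal.ofReal (Real.exp (-(c * b))) ∂(Measure.map S P)
      = ∏ i : Fin n, ENNReal.ofReal ((1 / p i) / (1 / p i + c)) := by
    rw [lintegral_map (by fun_prop) hS]
    have hpt : ∀ ω, ENNReal.ofReal (Real.exp (-(c * S ω)))
        = ∏ j ∈ Finset.univ.image Fin.succ,
            ENNReal.ofReal (Real.exp (-(c * f j ω))) := by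
      intro ω
      rw [← ENNReal.ofReal_prod_of_nonneg (fun i _ => (Real.exp_pos _).le), ← Real.exp_sum]
      congr 2
      rw [Finset.sum_image (fun i _ j _ h => Fin.succ_injective n h), hSdef]
      simp only [Finset.mul_sum, neg_neg, ← Finset.sum_neg_distrib]
    calc ∫⁻ ω, ENNReal.ofReal (Real.exp (-(c * S ω))) ∂P
        = ∫⁻ ω, ∏ j ∈ Finset.univ.image Fin.succ,
            ENNReal.ofReal (Real.exp (-(c * f j ω))) ∂P := lintegral_congr hpt
      _ = ∏ j ∈ Finset.univ.image Fin.succ,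
            ∫⁻ ω, ENNReal.ofReal (Real.exp (-(c * f j ω))) ∂P :=
          sinr_lintegral_prod hindep hf
            (fun _ b => ENNReal.ofReal (Real.exp (-(c * b)))) (fun _ => by fun_prop) _
      _ = ∏ i : Fin n, ∫⁻ ω, ENNReal.ofReal (Real.exp (-(c * f i.succ ω))) ∂P :=
          Finset.prod_image (fun i _ j _ h => Fin.succ_injective n h)
      _ = ∏ i : Fin n, ENNReal.ofReal ((1 / p i) / (1 / p i + c)) := by
          refine Finset.prod_congr rfl fun i _ => ?_
          have hmi := lintegral_map (μ := P)
            (f := fun b : ℝ => ENNReal.ofReal (Real.exp (-(c * b))))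
            (by fun_prop) (hf i.succ)
          rw [hYd i, sinr_laplace_exp (by have := hp i; positivity) hc] at hmi
          exact hmi.symm
  -- final assembly
  have hprod : ∀ i : Fin n, (1 / p i) / (1 / p i + c) = (p₀ / p i) / (p₀ / p i + x) := by
    intro i
    rw [hcdef]
    have hpi := hp i
    field_simp
  have hexp : Real.exp (-(c * σ2)) = Real.exp (-x * σ2 / p₀) := by
    rw [hcdef]; congr 1; field_simp
  have ht0 : 0 ≤ Real.exp (-x * σ2 / p₀) * ∏ i : Fin n, (p₀ / p i) / (p₀ / p i + x) := by
    apply mul_nonneg (Real.exp_pos _).le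
    apply Finset.prod_nonneg
    intro i _
    have := hp i
    positivity
  rw [hEvent, step1, step2, step3, hM]
  simp only [hprod, hexp]
  rw [← ENNReal.ofReal_prod_of_nonneg (fun i _ => by have := hp i; positivity),
    ← ENNReal.ofReal_mul (Real.exp_pos _).le,
    ← ENNReal.ofReal_one, ← ENNReal.ofReal_sub _ ht0]
end

section
/- For real s, a > 2, γ > 0, and 0 < δ < a − 2: ∫_1^{a−1−δ} z^{s-2}/(z + a − 1) · e^{-z/γ} dz = ∑_{n=0}^∞ ((−1)^n γ^{s+n−1}/(a−1)^{n+1}) [Γ(s+n−1, 1/γ) − Γ(s+n−1, (a−1−δ)/γ)], where Γ(·,·) is the upper incomplete Gamma function. -/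
open Real MeasureTheory Set Filter

/-- Upper incomplete Gamma function `Γ(s, y) = ∫_y^∞ t^(s-1) e^(-t) dt`. -/
noncomputable def upperIncGamma (s y : ℝ) : ℝ := ∫ t in Ioi y, t ^ (s - 1) * Real.exp (-t)

lemma gammaTail_integrable (u : ℝ) {y : ℝ} (hy : 0 < y) :
    IntegrableOn (fun t : ℝ => t ^ (u - 1) * Real.exp (-t)) (Ioi y) := by
  apply integrable_of_isBigO_exp_neg (b := 1/2) (by norm_num)
  · apply ContinuousOn.mul
    · exact fun t ht =>
        (Real.continuousAt_rpow_const t _ (Or.inl (hy.trans_le ht).ne')).continuousWithinAt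
    · exact (Real.continuous_exp.comp continuous_neg).continuousOn
  · refine Asymptotics.IsLittleO.isBigO ?_
    rw [Asymptotics.isLittleO_iff_tendsto fun x hx => absurd hx (Real.exp_pos _).ne']
    have h := tendsto_rpow_mul_exp_neg_mul_atTop_nhds_zero (u - 1) (1/2) (by norm_num)
    refine h.congr fun x => ?_
    rw [mul_div_assoc, ← Real.exp_sub]
    ring_nf

lemma gamma_diff_eq (u : ℝ) {x y : ℝ} (hx : 0 < x) (hxy : x ≤ y) :
    upperIncGamma u x - upperIncGamma u y
      = ∫ t in Ioc x y, t ^ (u - 1) * Real.exp (-t) := by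
  have hy : 0 < y := hx.trans_le hxy
  have h1 : IntegrableOn (fun t : ℝ => t ^ (u - 1) * Real.exp (-t)) (Ioc x y) :=
    (gammaTail_integrable u hx).mono_set Ioc_subset_Ioi_self
  have h2 := gammaTail_integrable u hy
  have hsplit : upperIncGamma u x
      = (∫ t in Ioc x y, t ^ (u - 1) * Real.exp (-t)) + upperIncGamma u y := by
    rw [upperIncGamma, ← Ioc_union_Ioi_eq_Ioi hxy,
      setIntegral_union (Ioc_disjoint_Ioi le_rfl) measurableSet_Ioi h1 h2]
    rfl
  rw [hsplit]; ring

lemma subst_integral (u : ℝ) {γ b : ℝ} (hγ : 0 < γ) (hb : 1 ≤ b) :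
    ∫ z in Ioc (1:ℝ) b, z ^ (u - 1) * Real.exp (-z / γ)
      = γ ^ u * ∫ t in Ioc (1/γ) (b/γ), t ^ (u - 1) * Real.exp (-t) := by
  have hγ' : γ ≠ 0 := hγ.ne'
  have hbγ : 1/γ ≤ b/γ := by gcongr
  rw [← intervalIntegral.integral_of_le hb, ← intervalIntegral.integral_of_le hbγ]
  have := intervalIntegral.integral_comp_mul_left
    (a := 1/γ) (b := b/γ) (fun z => z ^ (u - 1) * Real.exp (-z / γ)) (c := γ) hγ'
  rw [mul_one_div, div_self hγ', mul_div_cancel₀ _ hγ'] at this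
  have heq : ∀ x ∈ uIcc (1/γ) (b/γ),
      (γ * x) ^ (u - 1) * Real.exp (-(γ * x) / γ)
        = γ ^ (u - 1) * (x ^ (u - 1) * Real.exp (-x)) := by
    intro x hx
    have hx0 : 0 ≤ x := le_trans (le_min (by positivity) (by positivity)) hx.1
    rw [Real.mul_rpow hγ.le hx0, neg_div, mul_div_cancel_left₀ _ hγ']
    ring
  rw [intervalIntegral.integral_congr heq, intervalIntegral.integral_const_mul,
    smul_eq_mul] at this
  have h2 : (∫ x in (1:ℝ)..b, x ^ (u - 1) * Real.exp (-x / γ))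
      = γ * (γ ^ (u - 1) * ∫ t in (1/γ)..(b/γ), t ^ (u - 1) * Real.exp (-t)) := by
    rw [this, ← mul_assoc, mul_inv_cancel₀ hγ', one_mul]
  rw [h2, ← mul_assoc]
  congr 1
  rw [Real.rpow_sub hγ, Real.rpow_one]
  field_simp

theorem finite_interval_series_expansion (s a γ δ : ℝ) (ha : 2 < a) (hγ : 0 < γ)
    (hδ : 0 < δ) (hδa : δ < a - 2) :
    HasSum
      (fun n : ℕ =>
        (-1 : ℝ) ^ n * γ ^ (s + n - 1) / (a - 1) ^ (n + 1) *
          (upperIncGamma (s + n - 1) (1 / γ) - upperIncGamma (s + n - 1) ((a - 1 - δ) / γ)))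
      (∫ z in Ioc (1 : ℝ) (a - 1 - δ), z ^ (s - 2) / (z + a - 1) * Real.exp (-z / γ)) := by
  set b : ℝ := a - 1 - δ with hb_def
  have hb1 : 1 < b := by simp only [hb_def]; linarith
  have hba : b < a - 1 := by simp only [hb_def]; linarith
  have ha1 : (1:ℝ) < a - 1 := by linarith
  have ha1' : (0:ℝ) < a - 1 := by linarith
  set F : ℕ → ℝ → ℝ := fun n z =>
    (-z / (a - 1)) ^ n * ((a - 1)⁻¹ * (z ^ (s - 2) * Real.exp (-z / γ))) with hF_def
  -- continuity / integrability of the basic pieces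
  have hg_cont : ∀ u : ℝ, ContinuousOn (fun z : ℝ => z ^ (u) * Real.exp (-z / γ)) (Icc 1 b) := by
    intro u
    apply ContinuousOn.mul
    · exact fun z hz => (Real.continuousAt_rpow_const z _
        (Or.inl (by linarith [hz.1] : z ≠ 0))).continuousWithinAt
    · exact (Real.continuous_exp.comp ((continuous_neg).div_const γ)).continuousOn
  have hg_int : ∀ u : ℝ,
      IntegrableOn (fun z : ℝ => z ^ u * Real.exp (-z / γ)) (Ioc 1 b) := fun u =>
    ((hg_cont u).integrableOn_Icc).mono_set Ioc_subset_Icc_self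
  have hF_int : ∀ n, IntegrableOn (F n) (Ioc 1 b) := by
    intro n
    have : IntegrableOn (fun z : ℝ =>
        (-z / (a-1)) ^ n * ((a-1)⁻¹ * (z ^ (s - 2) * Real.exp (-z / γ)))) (Ioc 1 b) := by
      apply IntegrableOn.mono_set _ Ioc_subset_Icc_self
      apply ContinuousOn.integrableOn_Icc
      exact (((continuous_neg.div_const _).pow n).continuousOn).mul
        ((continuousOn_const).mul (hg_cont (s-2)))
    exact this
  -- each F n equals z^(s+n-2) * exp(-z/γ) up to constants, on the domain
  have hF_eq : ∀ n : ℕ, ∀ z ∈ Ioc (1:ℝ) b,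
      F n z = (-1:ℝ)^n / (a-1)^(n+1) * (z ^ (s + n - 1 - 1) * Real.exp (-z / γ)) := by
    intro n z hz
    have hz0 : (0:ℝ) < z := by linarith [hz.1]
    have h1 : (-z / (a - 1)) ^ n = (-1:ℝ)^n * z^n / (a-1)^n := by
      rw [div_pow, neg_pow z n]  -- (-z)^n = (-1)^n * z^n
    have h2 : (z:ℝ)^n * z ^ (s - 2) = z ^ (s + n - 1 - 1) := by
      rw [← Real.rpow_natCast z n, ← Real.rpow_add hz0]
      ring_nf
    simp only [hF_def, h1, pow_succ]
    field_simp
    rw [← h2]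
  -- term identity
  have hterm : ∀ n : ℕ,
      (-1 : ℝ) ^ n * γ ^ (s + n - 1) / (a - 1) ^ (n + 1) *
          (upperIncGamma (s + n - 1) (1 / γ) - upperIncGamma (s + n - 1) (b / γ))
        = ∫ z in Ioc (1:ℝ) b, F n z := by
    intro n
    rw [setIntegral_congr_fun measurableSet_Ioc (hF_eq n)]
    rw [integral_const_mul, subst_integral (s + n - 1) hγ hb1.le,
      ← gamma_diff_eq (s + n - 1) (by positivity) (by gcongr <;> linarith)]
    ring
  -- summability of integrals of norms
  set r : ℝ := b / (a - 1) with hr_def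
  have hr0 : 0 < r := by positivity
  have hr1 : r < 1 := (div_lt_one ha1').mpr hba
  have hnorm_int : ∀ n, Integrable (fun z => ‖F n z‖) ((volume : Measure ℝ).restrict (Ioc 1 b)) :=
    fun n => (hF_int n).norm
  have hbound : ∀ n : ℕ, (∫ z in Ioc (1:ℝ) b, ‖F n z‖)
      ≤ r ^ n * ∫ z in Ioc (1:ℝ) b, (a-1)⁻¹ * (z ^ (s - 2) * Real.exp (-z / γ)) := by
    intro n
    rw [← integral_const_mul]
    apply setIntegral_mono_on (hnorm_int n)
      (((hg_int (s-2)).const_mul _).const_mul _) measurableSet_Ioc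
    intro z hz
    have hz0 : (0:ℝ) < z := by linarith [hz.1]
    have h1 : ‖F n z‖ = (z/(a-1))^n * ((a-1)⁻¹ * (z ^ (s-2) * Real.exp (-z/γ))) := by
      simp only [hF_def, norm_mul, norm_pow, Real.norm_eq_abs]
      rw [abs_div, abs_neg, abs_of_pos hz0, abs_of_pos ha1',
        abs_of_pos (by positivity : (0:ℝ) < (a-1)⁻¹),
        abs_of_pos (Real.rpow_pos_of_pos hz0 _), abs_of_pos (Real.exp_pos _)]
    rw [h1, hr_def]
    gcongr <;> first
      | positivity
      | exact hz.2
  have hsum_norm : Summable fun n => ∫ z in Ioc (1:ℝ) b, ‖F n z‖ := by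
    apply Summable.of_nonneg_of_le
      (fun n => integral_nonneg fun z => norm_nonneg _) hbound
    exact (summable_geometric_of_lt_one hr0.le hr1).mul_right _
  -- the main HasSum
  have hmain := MeasureTheory.hasSum_integral_of_summable_integral_norm
    (μ := (volume : Measure ℝ).restrict (Ioc 1 b)) (F := F) hF_int hsum_norm
  -- identify the sum of the series pointwise
  have hptwise : ∀ z ∈ Ioc (1:ℝ) b,
      (∑' n, F n z) = z ^ (s - 2) / (z + a - 1) * Real.exp (-z / γ) := by
    intro z hz
    have hz0 : (0:ℝ) < z := by linarith [hz.1]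
    have hlt : ‖-z / (a - 1)‖ < 1 := by
      rw [Real.norm_eq_abs, abs_div, abs_neg, abs_of_pos hz0, abs_of_pos ha1']
      rw [div_lt_one ha1']
      linarith [hz.2]
    have hgeo := hasSum_geometric_of_norm_lt_one hlt
    have := hgeo.mul_right ((a - 1)⁻¹ * (z ^ (s - 2) * Real.exp (-z / γ)))
    rw [this.tsum_eq]
    have hz_a : z + a - 1 ≠ 0 := by intro h; nlinarith
    have h1 : (1 - -z / (a - 1))⁻¹ * (a - 1)⁻¹ = (z + a - 1)⁻¹ := by
      rw [← mul_inv]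
      congr 1
      field_simp
      ring
    rw [← mul_assoc, h1]
    ring
  have hint_eq : (∫ z in Ioc (1:ℝ) b, ∑' n, F n z)
      = ∫ z in Ioc (1:ℝ) b, z ^ (s - 2) / (z + a - 1) * Real.exp (-z / γ) :=
    setIntegral_congr_fun measurableSet_Ioc hptwise
  rw [← hint_eq]
  have hfe : (fun n : ℕ =>
        (-1 : ℝ) ^ n * γ ^ (s + n - 1) / (a - 1) ^ (n + 1) *
          (upperIncGamma (s + n - 1) (1 / γ) - upperIncGamma (s + n - 1) (b / γ)))
      = fun n => ∫ z in Ioc (1:ℝ) b, F n z := funext hterm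
  rw [hfe]
  exact hmain
end

section
/- For real s, a > 0, γ > 0, and δ > 0 with M := max(1, a−1+δ): ∫_M^∞ z^{s-2}/(z + a − 1) · e^{-z/γ} dz = ∑_{n=0}^∞ (1−a)^n γ^{s−n−2} Γ(s−n−2, M/γ), where Γ(·,·) is the upper incomplete Gamma function, provided |a−1|/M < 1. -/
open Real MeasureTheory Set

lemma aux_integrable {M γ : ℝ} (c : ℝ) (hM : 0 < M) (hγ : 0 < γ) :
    IntegrableOn (fun z : ℝ => z ^ c * Real.exp (-z / γ)) (Ioi M) := by
  apply integrable_of_isBigO_exp_neg (b := (2 * γ)⁻¹) (by positivity)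
  · intro z hz
    have hz0 : z ≠ 0 := ne_of_gt (lt_of_lt_of_le hM (mem_Ici.mp hz))
    exact ((Real.continuousAt_rpow_const z c (Or.inl hz0)).mul
      (by fun_prop)).continuousWithinAt
  · have h0 := tendsto_rpow_mul_exp_neg_mul_atTop_nhds_zero c (2 * γ)⁻¹ (by positivity)
    have heq : ∀ z : ℝ, z ^ c * Real.exp (-z / γ) =
        (z ^ c * Real.exp (-(2 * γ)⁻¹ * z)) * Real.exp (-(2 * γ)⁻¹ * z) := by
      intro z
      rw [mul_assoc, ← Real.exp_add]
      congr 2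
      field_simp
      ring
    calc (fun z : ℝ => z ^ c * Real.exp (-z / γ))
        = fun z : ℝ => (z ^ c * Real.exp (-(2 * γ)⁻¹ * z)) * Real.exp (-(2 * γ)⁻¹ * z) := by
          funext z; exact heq z
      _ =O[Filter.atTop] fun z : ℝ => (1 : ℝ) * Real.exp (-(2 * γ)⁻¹ * z) :=
          (h0.isBigO_one ℝ).mul (Asymptotics.isBigO_refl _ _)
      _ =O[Filter.atTop] fun z : ℝ => Real.exp (-(2 * γ)⁻¹ * z) := by
          simp [Asymptotics.isBigO_refl]

lemma aux_value {M γ : ℝ} (c : ℝ) (hM : 0 < M) (hγ : 0 < γ) :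
    ∫ z in Ioi M, z ^ c * Real.exp (-z / γ) = γ ^ (c + 1) * upperIncGamma (c + 1) (M / γ) := by
  have h1 : ∫ z in Ioi M, z ^ c * Real.exp (-z / γ)
      = ∫ z in Ioi M, γ ^ c * ((γ⁻¹ * z) ^ c * Real.exp (-(γ⁻¹ * z))) := by
    refine setIntegral_congr_fun measurableSet_Ioi fun z hz => ?_
    have hz0 : 0 < z := lt_trans hM (mem_Ioi.mp hz)
    have : (γ⁻¹ * z) ^ c = γ⁻¹ ^ c * z ^ c :=
      Real.mul_rpow (by positivity) hz0.le
    rw [this]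
    have hγc : γ ^ c * γ⁻¹ ^ c = 1 := by
      rw [← Real.mul_rpow hγ.le (by positivity), mul_inv_cancel₀ hγ.ne', Real.one_rpow]
    have : -(γ⁻¹ * z) = -z / γ := by field_simp
    rw [this]
    calc z ^ c * Real.exp (-z / γ) = (γ ^ c * γ⁻¹ ^ c) * (z ^ c * Real.exp (-z / γ)) := by
          rw [hγc, one_mul]
      _ = γ ^ c * (γ⁻¹ ^ c * z ^ c * Real.exp (-z / γ)) := by ring
  rw [h1, integral_const_mul,
    integral_comp_mul_left_Ioi (fun t => t ^ c * Real.exp (-t)) M (inv_pos.mpr hγ)]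
  have h2 : γ⁻¹ * M = M / γ := by ring
  have h3 : (γ⁻¹)⁻¹ = γ := inv_inv γ
  rw [h2, h3, smul_eq_mul]
  unfold upperIncGamma
  rw [add_sub_cancel_right, Real.rpow_add hγ, Real.rpow_one]
  ring

theorem tail_integral_series_expansion (s a γ δ : ℝ) (ha : 0 < a) (hγ : 0 < γ) (hδ : 0 < δ)
    (hconv : |a - 1| / max 1 (a - 1 + δ) < 1) :
    HasSum
      (fun n : ℕ =>
        (1 - a) ^ n * γ ^ (s - n - 2) * upperIncGamma (s - n - 2) (max 1 (a - 1 + δ) / γ))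
      (∫ z in Ioi (max 1 (a - 1 + δ)), z ^ (s - 2) / (z + a - 1) * Real.exp (-z / γ)) := by
  set M : ℝ := max 1 (a - 1 + δ) with hMdef
  have hM1 : (1 : ℝ) ≤ M := le_max_left _ _
  have hM0 : (0 : ℝ) < M := lt_of_lt_of_le one_pos hM1
  have habs : |a - 1| < M := (div_lt_one hM0).mp hconv
  set F : ℕ → ℝ → ℝ := fun n z => (1 - a) ^ n * (z ^ (s - n - 3) * Real.exp (-z / γ))
    with hFdef
  -- rewrite of the exponent
  have hsplit : ∀ n : ℕ, ∀ z : ℝ, 0 < z →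
      z ^ (s - (n : ℝ) - 3) = z ^ (s - 3) * (z ^ n)⁻¹ := by
    intro n z hz
    rw [show s - (n : ℝ) - 3 = (s - 3) + (-(n : ℝ)) by ring, Real.rpow_add hz,
      Real.rpow_neg hz.le, Real.rpow_natCast]
  have hF_int : ∀ n : ℕ, Integrable (F n) (volume.restrict (Ioi M)) := by
    intro n
    exact ((aux_integrable (s - n - 3) hM0 hγ).const_mul _)
  -- the dominating constant
  set C : ℝ := ∫ z in Ioi M, z ^ (s - 3) * Real.exp (-z / γ) with hCdef
  have hC0 : 0 ≤ C := by
    apply setIntegral_nonneg measurableSet_Ioi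
    intro z hz
    have hz0 : 0 < z := lt_trans hM0 hz
    positivity
  have hbound : ∀ n : ℕ, ∫ z in Ioi M, ‖F n z‖ ≤ (|a - 1| / M) ^ n * C := by
    intro n
    have step : ∫ z in Ioi M, ‖F n z‖
        ≤ ∫ z in Ioi M, (|a - 1| / M) ^ n * (z ^ (s - 3) * Real.exp (-z / γ)) := by
      refine setIntegral_mono_on (hF_int n).norm
        ((aux_integrable (s - 3) hM0 hγ).const_mul _) measurableSet_Ioi ?_
      intro z hz
      have hz0 : 0 < z := lt_trans hM0 (mem_Ioi.mp hz)
      have hMz : M ≤ z := le_of_lt (mem_Ioi.mp hz)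
      have h1 : ‖F n z‖ = |a - 1| ^ n * (z ^ (s - n - 3) * Real.exp (-z / γ)) := by
        simp only [hFdef, norm_mul, norm_pow, Real.norm_eq_abs]
        rw [abs_of_pos (Real.rpow_pos_of_pos hz0 _), abs_of_pos (Real.exp_pos _),
          show |1 - a| = |a - 1| by rw [abs_sub_comm]]
      rw [h1, hsplit n z hz0]
      have hzn : (z ^ n)⁻¹ ≤ (M ^ n)⁻¹ := by
        apply inv_anti₀ (by positivity)
        exact pow_le_pow_left₀ hM0.le hMz n
      have hz3 : (0:ℝ) ≤ z ^ (s - 3) := (Real.rpow_pos_of_pos hz0 _).le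
      calc |a - 1| ^ n * (z ^ (s - 3) * (z ^ n)⁻¹ * Real.exp (-z / γ))
          ≤ |a - 1| ^ n * (z ^ (s - 3) * (M ^ n)⁻¹ * Real.exp (-z / γ)) := by
            apply mul_le_mul_of_nonneg_left _ (by positivity)
            apply mul_le_mul_of_nonneg_right _ (Real.exp_pos _).le
            exact mul_le_mul_of_nonneg_left hzn hz3
        _ = (|a - 1| / M) ^ n * (z ^ (s - 3) * Real.exp (-z / γ)) := by
            rw [div_pow, div_eq_mul_inv]
            ring
    calc ∫ z in Ioi M, ‖F n z‖
        ≤ ∫ z in Ioi M, (|a - 1| / M) ^ n * (z ^ (s - 3) * Real.exp (-z / γ)) := step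
      _ = (|a - 1| / M) ^ n * C := by rw [integral_const_mul]
  have hsum : Summable fun n : ℕ => ∫ z in Ioi M, ‖F n z‖ := by
    apply Summable.of_nonneg_of_le
      (fun n => integral_nonneg fun z => norm_nonneg _) hbound
    exact (summable_geometric_of_lt_one (by positivity) hconv).mul_right C
  have H := hasSum_integral_of_summable_integral_norm hF_int hsum
  -- identify the terms
  have hterm : ∀ n : ℕ, ∫ z in Ioi M, F n z
      = (1 - a) ^ n * γ ^ (s - n - 2) * upperIncGamma (s - n - 2) (M / γ) := by
    intro n
    rw [hFdef]
    simp only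
    rw [integral_const_mul, aux_value (s - n - 3) hM0 hγ,
      show s - (n : ℝ) - 3 + 1 = s - n - 2 by ring, mul_assoc]
  -- identify the integrand
  have hint : ∫ z in Ioi M, ∑' n, F n z
      = ∫ z in Ioi M, z ^ (s - 2) / (z + a - 1) * Real.exp (-z / γ) := by
    refine setIntegral_congr_fun measurableSet_Ioi fun z hz => ?_
    have hzM : M < z := mem_Ioi.mp hz
    have hz0 : 0 < z := lt_trans hM0 hzM
    have hza : 0 < z + a - 1 := by
      have := abs_lt.mp habs
      linarith
    have hr : |(1 - a) / z| < 1 := by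
      rw [abs_div, abs_of_pos hz0, div_lt_one hz0, abs_sub_comm]
      exact lt_trans habs hzM
    have hgeo := (hasSum_geometric_of_abs_lt_one hr).mul_right
      (z ^ (s - 3) * Real.exp (-z / γ))
    have hfun : (fun n : ℕ => ((1 - a) / z) ^ n * (z ^ (s - 3) * Real.exp (-z / γ)))
        = fun n => F n z := by
      funext n
      rw [hFdef]
      simp only
      rw [hsplit n z hz0, div_pow, div_eq_mul_inv]
      ring
    rw [hfun] at hgeo
    rw [hgeo.tsum_eq]
    have h1 : (1 - (1 - a) / z)⁻¹ = z / (z + a - 1) := by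
      rw [eq_div_iff hza.ne', inv_mul_eq_div, div_eq_iff]
      · field_simp
        ring
      · intro h
        rw [sub_eq_zero] at h
        have : z = 1 - a := by
          field_simp at h
          linarith [h]
        rw [this] at hz0 hza
        linarith
    rw [h1]
    rw [show s - 2 = (s - 3) + 1 by ring, Real.rpow_add_one hz0.ne']
    ring
  rw [hint] at H
  have : (fun n : ℕ => ∫ z in Ioi M, F n z)
      = fun n : ℕ => (1 - a) ^ n * γ ^ (s - n - 2) * upperIncGamma (s - n - 2) (M / γ) := by
    funext n; exact hterm n
  rwa [this] at H
end

section
/- For a > 1, γ > 0, even k ≥ 0, and s < 1, the truncated sums satisfy Ψ^{k+1}(s) ≤ ∫_0^∞ (1+x)^{s−2}/(a+x) · e^{−x/γ} dx ≤ Ψ^k(s), where Ψ^k(s) is obtained by truncating the alternating series representation (from the expansions of the integral in terms of incomplete Gamma functions) at index k, in the limit δ → 0. -/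
open Real MeasureTheory Set Finset

/-- The truncated series `Ψ^k(s)` from the paper's Corollary 1, in the limit `δ → 0`:
`Ψ^k(s) = e^(1/γ) (I₁^k(s) + I₂^k(s))` where the middle term `I_δ(s)` vanishes as `δ → 0`. -/
noncomputable def Psi (a γ s : ℝ) (k : ℕ) : ℝ :=
  Real.exp (1 / γ) *
    ((if 2 < a then
        ∑ n ∈ range (k + 1),
          (-1 : ℝ) ^ n * γ ^ (s + n - 1) / (a - 1) ^ (n + 1) *
            (upperIncGamma (s + n - 1) (1 / γ) - upperIncGamma (s + n - 1) ((a - 1) / γ))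
      else 0)
      + ∑ n ∈ range (k + 1),
          (1 - a) ^ n * γ ^ (s - n - 2) * upperIncGamma (s - n - 2) (max 1 (a - 1) / γ))


open Filter


lemma integrableOn_shift_rpow_mul_exp (c b d y : ℝ) (hb : 0 < b) (h : 0 < d + y) :
    IntegrableOn (fun x : ℝ => (d + x) ^ c * Real.exp (-b * x)) (Ioi y) := by
  apply integrable_of_isBigO_exp_neg (half_pos hb)
  · apply ContinuousOn.mul
    · intro x hx
      have hy : y ≤ x := hx
      have hdx : d + x ≠ 0 := by nlinarith
      exact ((continuousAt_const.add continuousAt_id).rpow_const (Or.inl hdx)).continuousWithinAt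
    · exact (Real.continuous_exp.comp (continuous_const.mul continuous_id)).continuousOn
  · have h1 : Tendsto (fun x : ℝ => (d + x) ^ c * Real.exp (-(b/2) * x)) atTop (nhds 0) := by
      have h2 := tendsto_rpow_mul_exp_neg_mul_atTop_nhds_zero c (b/2) (half_pos hb)
      have h3 : Tendsto (fun x : ℝ => d + x) atTop atTop :=
        tendsto_atTop_add_const_left _ d tendsto_id
      have h4 := (h2.comp h3).const_mul (Real.exp (b/2*d))
      rw [mul_zero] at h4
      refine h4.congr (fun x => ?_)
      simp only [Function.comp]
      rw [mul_comm, mul_assoc, ← Real.exp_add]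
      ring_nf
    calc (fun x : ℝ => (d + x) ^ c * Real.exp (-b * x))
        = fun x : ℝ => ((d + x) ^ c * Real.exp (-(b/2) * x)) * Real.exp (-(b/2) * x) := by
          funext x; rw [mul_assoc, ← Real.exp_add]; ring_nf
      _ =O[atTop] fun x : ℝ => 1 * Real.exp (-(b/2) * x) :=
          (h1.isBigO_one ℝ).mul (Asymptotics.isBigO_refl _ _)
      _ = fun x : ℝ => Real.exp (-(b/2) * x) := by funext x; rw [one_mul]

lemma setIntegral_Ioi_comp_add_right (f : ℝ → ℝ) (d m : ℝ) :
    ∫ x in Ioi m, f (x + d) = ∫ x in Ioi (m + d), f x := by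
  have h := (measurePreserving_add_right (volume : Measure ℝ) d).setIntegral_preimage_emb
    (measurableEmbedding_addRight d) f (Ioi (m + d))
  rw [← h]
  congr 1
  ext x
  simp [Set.mem_preimage]

lemma geom_partial (A B : ℝ) (hA : 0 < A) (hB : 0 ≤ B) (k : ℕ) :
    ∑ n ∈ range (k+1), (-1:ℝ)^n * B^n / A^(n+1)
      = (1 - (-(B/A))^(k+1)) / (A + B) := by
  have hA' : A ≠ 0 := hA.ne'
  have hABpos : 0 < A + B := by linarith
  have hAB : A + B ≠ 0 := hABpos.ne'
  have hx1 : -(B/A) ≠ 1 := by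
    have h0 : 0 ≤ B / A := div_nonneg hB hA.le
    intro hc
    rw [neg_eq_iff_eq_neg] at hc
    linarith
  have hterm : ∀ n ∈ range (k+1), (-1:ℝ)^n * B^n / A^(n+1) = A⁻¹ * (-(B/A))^n := by
    intro n _
    rw [← neg_div, div_pow, neg_pow, pow_succ]
    field_simp
    ring
  rw [Finset.sum_congr rfl hterm, ← Finset.mul_sum, geom_sum_eq hx1]
  have hsub : -(B/A) - 1 ≠ 0 := sub_ne_zero.mpr hx1
  have hAx : A * (-(B/A) - 1) = -(A+B) := by field_simp; ring
  generalize hX : (-(B/A)) = X at hsub hAx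
  have hAB2 : A + B = -(A*(X-1)) := by linarith
  rw [eq_div_iff hAB, hAB2]
  field_simp
  ring

lemma partial_ge (A B : ℝ) (hA : 0 < A) (hB : 0 ≤ B) (k : ℕ) (hk : Even k) :
    1/(A+B) ≤ ∑ n ∈ range (k+1), (-1:ℝ)^n * B^n / A^(n+1) := by
  rw [geom_partial A B hA hB k]
  have hABpos : 0 < A + B := by linarith
  have hodd : Odd (k+1) := Even.add_one hk
  rw [hodd.neg_pow]
  have h0 : 0 ≤ (B/A)^(k+1) := pow_nonneg (div_nonneg hB hA.le) _
  rw [div_le_div_iff₀ hABpos hABpos]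
  nlinarith

lemma partial_le (A B : ℝ) (hA : 0 < A) (hB : 0 ≤ B) (k : ℕ) (hk : Odd k) :
    ∑ n ∈ range (k+1), (-1:ℝ)^n * B^n / A^(n+1) ≤ 1/(A+B) := by
  rw [geom_partial A B hA hB k]
  have hABpos : 0 < A + B := by linarith
  have heven : Even (k+1) := Odd.add_one hk
  rw [heven.neg_pow]
  have h0 : 0 ≤ (B/A)^(k+1) := pow_nonneg (div_nonneg hB hA.le) _
  rw [div_le_div_iff₀ hABpos hABpos]
  nlinarith

lemma uig_integrable (c y : ℝ) (hy : 0 < y) :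
    IntegrableOn (fun t : ℝ => t ^ (c-1) * Real.exp (-t)) (Ioi y) := by
  have h := integrableOn_shift_rpow_mul_exp (c-1) 1 0 y one_pos (by simpa)
  refine h.congr_fun (fun x _ => ?_) measurableSet_Ioi
  simp

lemma xside_integrable (c γ m : ℝ) (hγ : 0 < γ) (hm : 0 ≤ m) :
    IntegrableOn (fun x : ℝ => (1+x) ^ (c-1) * Real.exp (-x/γ)) (Ioi m) := by
  have h := integrableOn_shift_rpow_mul_exp (c-1) γ⁻¹ 1 m (inv_pos.mpr hγ) (by linarith)
  refine h.congr_fun (fun x _ => ?_) measurableSet_Ioi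
  rw [div_eq_mul_inv]
  ring_nf

lemma tail_cv (c γ : ℝ) (hγ : 0 < γ) (m : ℝ) (hm : 0 ≤ m) :
    ∫ x in Ioi m, (1+x) ^ (c-1) * Real.exp (-x/γ)
      = Real.exp (1/γ) * γ ^ c * upperIncGamma c ((1+m)/γ) := by
  have hγ' : (γ:ℝ) ≠ 0 := hγ.ne'
  have step1 : ∫ x in Ioi m, (1+x) ^ (c-1) * Real.exp (-x/γ)
      = ∫ x in Ioi m, (fun u : ℝ => u ^ (c-1) * Real.exp ((1-u)/γ)) (x + 1) := by
    refine setIntegral_congr_fun measurableSet_Ioi (fun x _ => ?_)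
    simp only
    rw [add_comm x 1]
    congr 2
    ring
  rw [step1, setIntegral_Ioi_comp_add_right (fun u : ℝ => u ^ (c-1) * Real.exp ((1-u)/γ)) 1 m]
  have step2 : ∫ u in Ioi (m+1), u ^ (c-1) * Real.exp ((1-u)/γ)
      = Real.exp (1/γ) * ∫ u in Ioi (m+1), (fun t : ℝ => (γ*t) ^ (c-1) * Real.exp (-t)) (γ⁻¹ * u) := by
    rw [← integral_const_mul]
    refine setIntegral_congr_fun measurableSet_Ioi (fun u _ => ?_)
    simp only
    rw [mul_inv_cancel_left₀ hγ']
    rw [← mul_assoc, mul_comm (Real.exp (1/γ)), mul_assoc, ← Real.exp_add]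
    congr 2
    field_simp
    ring
  rw [step2, integral_comp_mul_left_Ioi (fun t : ℝ => (γ*t) ^ (c-1) * Real.exp (-t)) (m+1) (inv_pos.mpr hγ), inv_inv]
  have hpos : 0 < γ⁻¹ * (m + 1) := by positivity
  have step3 : ∫ t in Ioi (γ⁻¹ * (m+1)), (γ*t) ^ (c-1) * Real.exp (-t)
      = γ ^ (c-1) * ∫ t in Ioi (γ⁻¹ * (m+1)), t ^ (c-1) * Real.exp (-t) := by
    rw [← integral_const_mul]
    refine setIntegral_congr_fun measurableSet_Ioi (fun t ht => ?_)
    have ht' : 0 < t := lt_trans hpos ht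
    rw [Real.mul_rpow hγ.le ht'.le]
    ring
  rw [step3, smul_eq_mul]
  have : γ * (γ ^ (c-1) * ∫ t in Ioi (γ⁻¹ * (m+1)), t ^ (c-1) * Real.exp (-t))
      = γ ^ c * ∫ t in Ioi (γ⁻¹ * (m+1)), t ^ (c-1) * Real.exp (-t) := by
    rw [← mul_assoc]
    congr 1
    have h2 := Real.rpow_add hγ 1 (c-1)
    rw [Real.rpow_one] at h2
    rw [← h2]
    norm_num
  rw [this, upperIncGamma]
  have harg : (1+m)/γ = γ⁻¹ * (m+1) := by field_simp; ring
  rw [harg]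
  ring

lemma uig_diff (c γ A : ℝ) (hγ : 0 < γ) (hA : 1 ≤ A) :
    upperIncGamma c (1/γ) - upperIncGamma c (A/γ)
      = ∫ t in Ioc (1/γ) (A/γ), t ^ (c-1) * Real.exp (-t) := by
  have hle : 1/γ ≤ A/γ := by
    gcongr
  have hpos : 0 < 1/γ := by positivity
  have hu : Ioc (1/γ) (A/γ) ∪ Ioi (A/γ) = Ioi (1/γ) := Ioc_union_Ioi_eq_Ioi hle
  have hI1 : IntegrableOn (fun t : ℝ => t ^ (c-1) * Real.exp (-t)) (Ioc (1/γ) (A/γ)) :=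
    (uig_integrable c _ hpos).mono_set Ioc_subset_Ioi_self
  have hI2 : IntegrableOn (fun t : ℝ => t ^ (c-1) * Real.exp (-t)) (Ioi (A/γ)) :=
    uig_integrable c _ (lt_of_lt_of_le hpos hle)
  unfold upperIncGamma
  rw [← hu, setIntegral_union (Ioc_disjoint_Ioi le_rfl) measurableSet_Ioi hI1 hI2]
  ring

lemma mid_cv (c γ A : ℝ) (hγ : 0 < γ) (hA : 1 ≤ A) :
    ∫ x in Ioc 0 (A-1), (1+x) ^ (c-1) * Real.exp (-x/γ)
      = Real.exp (1/γ) * γ ^ c * ∫ t in Ioc (1/γ) (A/γ), t ^ (c-1) * Real.exp (-t) := by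
  have hγ' : (γ:ℝ) ≠ 0 := hγ.ne'
  have hA0 : (0:ℝ) ≤ A - 1 := by linarith
  have hle : 1/γ ≤ A/γ := by gcongr
  have hpos : 0 < 1/γ := by positivity
  rw [← intervalIntegral.integral_of_le hA0]
  have step1 : ∫ x in (0:ℝ)..(A-1), (1+x) ^ (c-1) * Real.exp (-x/γ)
      = ∫ x in (0:ℝ)..(A-1), (fun u : ℝ => u ^ (c-1) * Real.exp ((1-u)/γ)) (x + 1) := by
    refine intervalIntegral.integral_congr (fun x _ => ?_)
    simp only
    rw [add_comm x 1]
    congr 2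
    ring
  rw [step1, intervalIntegral.integral_comp_add_right (fun u : ℝ => u ^ (c-1) * Real.exp ((1-u)/γ)) 1]
  have hb1 : (0:ℝ)+1 = 1 := by norm_num
  have hb2 : A-1+1 = A := by ring
  rw [hb1, hb2]
  have step2 : ∫ u in (1:ℝ)..A, u ^ (c-1) * Real.exp ((1-u)/γ)
      = Real.exp (1/γ) * ∫ u in (1:ℝ)..A, (fun t : ℝ => (γ*t) ^ (c-1) * Real.exp (-t)) (γ⁻¹ * u) := by
    rw [← intervalIntegral.integral_const_mul]
    refine intervalIntegral.integral_congr (fun u _ => ?_)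
    simp only
    rw [mul_inv_cancel_left₀ hγ']
    rw [← mul_assoc, mul_comm (Real.exp (1/γ)), mul_assoc, ← Real.exp_add]
    congr 2
    field_simp
    ring
  rw [step2, intervalIntegral.integral_comp_mul_left (fun t : ℝ => (γ*t) ^ (c-1) * Real.exp (-t)) (inv_ne_zero hγ'), inv_inv]
  have harg1 : γ⁻¹ * 1 = 1/γ := by field_simp
  have harg2 : γ⁻¹ * A = A/γ := by field_simp
  rw [harg1, harg2, intervalIntegral.integral_of_le hle]
  have step3 : ∫ t in Ioc (1/γ) (A/γ), (γ*t) ^ (c-1) * Real.exp (-t)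
      = γ ^ (c-1) * ∫ t in Ioc (1/γ) (A/γ), t ^ (c-1) * Real.exp (-t) := by
    rw [← integral_const_mul]
    refine setIntegral_congr_fun measurableSet_Ioc (fun t ht => ?_)
    have ht' : 0 < t := lt_trans hpos ht.1
    rw [Real.mul_rpow hγ.le ht'.le]
    ring
  rw [step3, smul_eq_mul]
  have h2 := Real.rpow_add hγ 1 (c-1)
  rw [Real.rpow_one] at h2
  have hγc : γ * γ ^ (c-1) = γ ^ c := by rw [← h2]; norm_num
  rw [← mul_assoc γ, hγc, ← mul_assoc]

lemma psi_repr (a γ s : ℝ) (ha : 1 < a) (hγ : 0 < γ) (j : ℕ) :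
    IntegrableOn (fun x : ℝ => (1+x)^(s-2) * Real.exp (-x/γ) *
        ∑ n ∈ range (j+1), (-1:ℝ)^n * (min (1+x) (a-1))^n / (max (1+x) (a-1))^(n+1)) (Set.Ioi 0) ∧
    Psi a γ s j = ∫ x in Ioi 0, (1+x)^(s-2) * Real.exp (-x/γ) *
        ∑ n ∈ range (j+1), (-1:ℝ)^n * (min (1+x) (a-1))^n / (max (1+x) (a-1))^(n+1) := by
  set M := max 1 (a-1) with hM
  have hM1 : 1 ≤ M := le_max_left _ _
  have hMa : a - 1 ≤ M := le_max_right _ _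
  have hm0 : 0 ≤ M - 1 := by linarith
  set g : ℝ → ℝ := fun x => (1+x)^(s-2) * Real.exp (-x/γ) *
        ∑ n ∈ range (j+1), (-1:ℝ)^n * (min (1+x) (a-1))^n / (max (1+x) (a-1))^(n+1) with hg
  set T : ℝ → ℝ := fun x => ∑ n ∈ range (j+1),
      (1-a)^n * ((1+x)^((s-(n:ℝ)-2)-1) * Real.exp (-x/γ)) with hT
  have hTeq : EqOn g T (Set.Ioi (M-1)) := by
    intro x hx
    have hxM : M - 1 < x := hx
    have hx' : a - 1 < 1 + x := by linarith
    have hx0 : (0:ℝ) < 1 + x := by linarith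
    have hne : (1+x) ≠ 0 := hx0.ne'
    simp only [hg, hT]
    rw [Finset.mul_sum]
    refine Finset.sum_congr rfl (fun n _ => ?_)
    rw [min_eq_right hx'.le, max_eq_left hx'.le]
    have e1 : (1+x)^((s-(n:ℝ)-2)-1) = (1+x)^(s-2) / (1+x)^((n:ℝ)+1) := by
      rw [← Real.rpow_sub hx0]; congr 1; ring
    have e2 : (1+x)^((n:ℝ)+1) = (1+x)^(n+1 : ℕ) := by
      rw [← Real.rpow_natCast (1+x) (n+1)]; push_cast; ring_nf
    have e3 : (1-a)^n = (-1:ℝ)^n * (a-1)^n := by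
      rw [← neg_pow]; ring_nf
    rw [e1, e2, e3]
    field_simp
  have hTint : ∀ n ∈ range (j+1), IntegrableOn
      (fun x : ℝ => (1-a)^n * ((1+x)^((s-(n:ℝ)-2)-1) * Real.exp (-x/γ))) (Set.Ioi (M-1)) volume :=
    fun n _ => (xside_integrable _ γ _ hγ hm0).const_mul _
  have hTint' : IntegrableOn T (Set.Ioi (M-1)) := by
    rw [hT]
    exact integrable_finset_sum _ hTint
  have hgIoi : IntegrableOn g (Set.Ioi (M-1)) := hTint'.congr_fun hTeq.symm measurableSet_Ioi
  have hTval : ∫ x in Ioi (M-1), g x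
      = Real.exp (1/γ) * ∑ n ∈ range (j+1),
          (1-a)^n * γ^(s-(n:ℝ)-2) * upperIncGamma (s-(n:ℝ)-2) (M/γ) := by
    rw [setIntegral_congr_fun measurableSet_Ioi hTeq, hT, integral_finset_sum _ hTint,
      Finset.mul_sum]
    refine Finset.sum_congr rfl (fun n _ => ?_)
    rw [integral_const_mul, tail_cv (s-(n:ℝ)-2) γ hγ (M-1) hm0]
    have h1M : 1 + (M-1) = M := by ring
    rw [h1M]
    ring
  have hmid : IntegrableOn g (Set.Ioc 0 (M-1)) ∧ (∫ x in Ioc 0 (M-1), g x)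
      = (if 2 < a then Real.exp (1/γ) * ∑ n ∈ range (j+1),
          (-1:ℝ)^n * γ^(s+(n:ℝ)-1) / (a-1)^(n+1) *
            (upperIncGamma (s+(n:ℝ)-1) (1/γ) - upperIncGamma (s+(n:ℝ)-1) ((a-1)/γ))
        else 0) := by
    by_cases hcase : 2 < a
    · have hMa' : M = a - 1 := max_eq_right (by linarith)
      set S : ℝ → ℝ := fun x => ∑ n ∈ range (j+1),
          ((-1:ℝ)^n / (a-1)^(n+1)) * ((1+x)^((s+(n:ℝ)-1)-1) * Real.exp (-x/γ)) with hS
      have hSeq : EqOn g S (Set.Ioc 0 (M-1)) := by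
        intro x hx
        have hx0 : (0:ℝ) < 1 + x := by have := hx.1; linarith
        have hx' : 1 + x ≤ a - 1 := by have := hx.2; rw [hMa'] at this; linarith
        have hne : (a-1) ≠ 0 := by linarith
        simp only [hg, hS]
        rw [Finset.mul_sum]
        refine Finset.sum_congr rfl (fun n _ => ?_)
        rw [min_eq_left hx', max_eq_right hx']
        have e1 : (1+x)^((s+(n:ℝ)-1)-1) = (1+x)^(s-2) * (1+x)^(n:ℕ) := by
          rw [← Real.rpow_natCast (1+x) n, ← Real.rpow_add hx0]; congr 1; ring
        rw [e1]
        field_simp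
      have hSint : ∀ n ∈ range (j+1), IntegrableOn
          (fun x : ℝ => ((-1:ℝ)^n / (a-1)^(n+1)) * ((1+x)^((s+(n:ℝ)-1)-1) * Real.exp (-x/γ)))
          (Set.Ioc 0 (M-1)) volume := fun n _ =>
        (((xside_integrable _ γ 0 hγ le_rfl).mono_set Ioc_subset_Ioi_self).const_mul _)
      have hSint' : IntegrableOn S (Set.Ioc 0 (M-1)) := by
        rw [hS]; exact integrable_finset_sum _ hSint
      refine ⟨hSint'.congr_fun hSeq.symm measurableSet_Ioc, ?_⟩
      rw [setIntegral_congr_fun measurableSet_Ioc hSeq, hS, integral_finset_sum _ hSint,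
        if_pos hcase, Finset.mul_sum]
      refine Finset.sum_congr rfl (fun n _ => ?_)
      rw [integral_const_mul]
      have hA1 : 1 ≤ a - 1 := by linarith
      have hsub : M - 1 = (a-1) - 1 := by rw [hMa']
      rw [hsub, mid_cv (s+(n:ℝ)-1) γ (a-1) hγ hA1, ← uig_diff (s+(n:ℝ)-1) γ (a-1) hγ hA1]
      ring
    · have hM0 : M = 1 := max_eq_left (by linarith)
      rw [hM0]
      norm_num
      intro h; exact absurd h hcase
  have hunion : Set.Ioc 0 (M-1) ∪ Set.Ioi (M-1) = Set.Ioi 0 := Set.Ioc_union_Ioi_eq_Ioi hm0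
  have hgint : IntegrableOn g (Set.Ioi 0) := by
    rw [← hunion]; exact hmid.1.union hgIoi
  refine ⟨hgint, ?_⟩
  rw [← hunion, setIntegral_union (Ioc_disjoint_Ioi le_rfl) measurableSet_Ioi hmid.1 hgIoi,
    hmid.2, hTval, Psi]
  rw [mul_add, mul_ite, mul_zero]


theorem truncated_series_bounds (a γ s : ℝ) (ha : 1 < a) (hγ : 0 < γ) (hs : s < 1)
    (k : ℕ) (hk : Even k) :
    Psi a γ s (k + 1)
        ≤ ∫ x in Ioi (0 : ℝ), (1 + x) ^ (s - 2) / (a + x) * Real.exp (-x / γ)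
      ∧ ∫ x in Ioi (0 : ℝ), (1 + x) ^ (s - 2) / (a + x) * Real.exp (-x / γ)
        ≤ Psi a γ s k := by
  obtain ⟨hint_k, hrep_k⟩ := psi_repr a γ s ha hγ k
  obtain ⟨hint_k1, hrep_k1⟩ := psi_repr a γ s ha hγ (k+1)
  -- basic pointwise facts
  have key : ∀ j : ℕ, ∀ x : ℝ, x ∈ Set.Ioi (0:ℝ) →
      ((Even j → (1 + x) ^ (s - 2) / (a + x) * Real.exp (-x / γ)
          ≤ (1+x)^(s-2) * Real.exp (-x/γ) *
            ∑ n ∈ range (j+1), (-1:ℝ)^n * (min (1+x) (a-1))^n / (max (1+x) (a-1))^(n+1))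
        ∧ (Odd j → (1+x)^(s-2) * Real.exp (-x/γ) *
            ∑ n ∈ range (j+1), (-1:ℝ)^n * (min (1+x) (a-1))^n / (max (1+x) (a-1))^(n+1)
          ≤ (1 + x) ^ (s - 2) / (a + x) * Real.exp (-x / γ))) := by
    intro j x hx
    have hx0 : (0:ℝ) < x := hx
    have hx1 : (0:ℝ) < 1 + x := by linarith
    have hA : 0 < max (1+x) (a-1) := lt_of_lt_of_le hx1 (le_max_left _ _)
    have hB : 0 ≤ min (1+x) (a-1) := le_min (by linarith) (by linarith)
    have hsum : min (1+x) (a-1) + max (1+x) (a-1) = a + x := by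
      rw [min_add_max]; ring
    have hC : 0 ≤ (1+x)^(s-2) * Real.exp (-x/γ) :=
      mul_nonneg (Real.rpow_nonneg hx1.le _) (Real.exp_pos _).le
    have hfC : (1 + x) ^ (s - 2) / (a + x) * Real.exp (-x / γ)
        = ((1+x)^(s-2) * Real.exp (-x/γ)) * (1 / (max (1+x) (a-1) + min (1+x) (a-1))) := by
      rw [add_comm (max _ _), hsum]; ring
    constructor
    · intro hj
      rw [hfC]
      refine mul_le_mul_of_nonneg_left ?_ hC
      have := partial_ge (max (1+x) (a-1)) (min (1+x) (a-1)) hA hB j hj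
      exact this
    · intro hj
      rw [hfC]
      refine mul_le_mul_of_nonneg_left ?_ hC
      exact partial_le (max (1+x) (a-1)) (min (1+x) (a-1)) hA hB j hj
  -- integrability of f
  have hdom : IntegrableOn (fun x : ℝ => (1+x)^(s-2) * Real.exp (-x/γ)) (Set.Ioi 0) := by
    have h := xside_integrable (s-1) γ 0 hγ le_rfl
    have : (s-1)-1 = s-2 := by ring
    rwa [this] at h
  have hfint : IntegrableOn (fun x : ℝ => (1 + x) ^ (s - 2) / (a + x) * Real.exp (-x / γ))
      (Set.Ioi 0) := by
    refine hdom.mono' ?_ ?_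
    · refine ContinuousOn.aestronglyMeasurable ?_ measurableSet_Ioi
      apply ContinuousOn.mul
      · apply ContinuousOn.div
        · intro x hx
          have hx1 : (1:ℝ) + x ≠ 0 := by have : (0:ℝ) < x := hx; intro hc; linarith
          exact ((continuousAt_const.add continuousAt_id).rpow_const
            (Or.inl hx1)).continuousWithinAt
        · exact (continuous_const.add continuous_id).continuousOn
        · intro x hx
          have : (0:ℝ) < x := hx
          intro hc; linarith
      · exact ((continuous_id.neg.div_const γ).rexp).continuousOn
    · refine (ae_restrict_iff' measurableSet_Ioi).mpr (ae_of_all _ fun x hx => ?_)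
      have hx0 : (0:ℝ) < x := hx
      have hx1 : (0:ℝ) < 1 + x := by linarith
      have hax : (1:ℝ) ≤ a + x := by linarith
      have hC : 0 ≤ (1+x)^(s-2) * Real.exp (-x/γ) :=
        mul_nonneg (Real.rpow_nonneg hx1.le _) (Real.exp_pos _).le
      have hfx : (1 + x) ^ (s - 2) / (a + x) * Real.exp (-x / γ)
          = ((1+x)^(s-2) * Real.exp (-x/γ)) / (a + x) := by ring
      rw [Real.norm_eq_abs, hfx, abs_of_nonneg (div_nonneg hC (by linarith))]
      exact div_le_self hC hax
  constructor
  · rw [hrep_k1]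
    exact setIntegral_mono_on hint_k1 hfint measurableSet_Ioi
      (fun x hx => (key (k+1) x hx).2 (Even.add_one hk))
  · rw [hrep_k]
    exact setIntegral_mono_on hfint hint_k measurableSet_Ioi
      (fun x hx => (key k x hx).1 hk)
end

section
/- Let S₁(τ,t) and S₂(τ,t) be independent nonnegative bivariate processes and define the (min,×) convolution (S₁ ⊗ S₂)(τ,t) = min_{τ ≤ u ≤ t} S₁(τ,u)·S₂(u,t) over integer u. Then for s < 1, E[((S₁ ⊗ S₂)(τ,t))^{s−1}] ≤ ∑_{u=τ}^{t} E[S₁(τ,u)^{s−1}] · E[S₂(u,t)^{s−1}]. -/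
open MeasureTheory ProbabilityTheory Finset

theorem min_times_convolution_mellin_bound
    {Ω : Type*} [MeasurableSpace Ω] (P : Measure Ω) [IsProbabilityMeasure P]
    (S₁ S₂ : ℕ → ℕ → Ω → ℝ) (τ t : ℕ) (hτt : τ ≤ t)
    (hmeas₁ : ∀ τ' t', Measurable (S₁ τ' t')) (hmeas₂ : ∀ τ' t', Measurable (S₂ τ' t'))
    (hpos₁ : ∀ τ' t' ω, 0 < S₁ τ' t' ω) (hpos₂ : ∀ τ' t' ω, 0 < S₂ τ' t' ω)
    (hindep : ∀ u, IndepFun (S₁ τ u) (S₂ u t) P)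
    (s : ℝ) (hs : s < 1)
    (hint₁ : ∀ u, Integrable (fun ω => S₁ τ u ω ^ (s - 1)) P)
    (hint₂ : ∀ u, Integrable (fun ω => S₂ u t ω ^ (s - 1)) P) :
    ∫ ω, ((Icc τ t).inf' (Finset.nonempty_Icc.mpr hτt)
          (fun u => S₁ τ u ω * S₂ u t ω)) ^ (s - 1) ∂P
      ≤ ∑ u ∈ Icc τ t,
          (∫ ω, S₁ τ u ω ^ (s - 1) ∂P) * (∫ ω, S₂ u t ω ^ (s - 1) ∂P) := by
  have hne : (Icc τ t).Nonempty := Finset.nonempty_Icc.mpr hτt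
  -- independence of the rpow'd variables
  have hindep' : ∀ u, IndepFun (fun ω => S₁ τ u ω ^ (s - 1))
      (fun ω => S₂ u t ω ^ (s - 1)) P := fun u =>
    (hindep u).comp (measurable_id.pow_const _) (measurable_id.pow_const _)
  have hintmul : ∀ u, Integrable
      (fun ω => S₁ τ u ω ^ (s - 1) * S₂ u t ω ^ (s - 1)) P := fun u =>
    (hindep' u).integrable_mul (hint₁ u) (hint₂ u)
  have hintsum : Integrable
      (fun ω => ∑ u ∈ Icc τ t, S₁ τ u ω ^ (s - 1) * S₂ u t ω ^ (s - 1)) P :=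
    integrable_finset_sum _ fun u _ => hintmul u
  have hmono : ∫ ω, ((Icc τ t).inf' hne
          (fun u => S₁ τ u ω * S₂ u t ω)) ^ (s - 1) ∂P
      ≤ ∫ ω, ∑ u ∈ Icc τ t, S₁ τ u ω ^ (s - 1) * S₂ u t ω ^ (s - 1) ∂P := by
    apply integral_mono_of_nonneg
    · filter_upwards with ω
      obtain ⟨u₀, hu₀, heq⟩ := Finset.exists_mem_eq_inf' hne
        (fun u => S₁ τ u ω * S₂ u t ω)
      rw [heq]
      exact Real.rpow_nonneg (mul_nonneg (hpos₁ τ u₀ ω).le (hpos₂ u₀ t ω).le) _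
    · exact hintsum
    · filter_upwards with ω
      obtain ⟨u₀, hu₀, heq⟩ := Finset.exists_mem_eq_inf' hne
        (fun u => S₁ τ u ω * S₂ u t ω)
      rw [heq]
      calc (S₁ τ u₀ ω * S₂ u₀ t ω) ^ (s - 1)
          = S₁ τ u₀ ω ^ (s - 1) * S₂ u₀ t ω ^ (s - 1) :=
            Real.mul_rpow (hpos₁ τ u₀ ω).le (hpos₂ u₀ t ω).le
        _ ≤ ∑ u ∈ Icc τ t, S₁ τ u ω ^ (s - 1) * S₂ u t ω ^ (s - 1) :=
            Finset.single_le_sum (f := fun u => S₁ τ u ω ^ (s - 1) * S₂ u t ω ^ (s - 1))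
              (fun u _ => mul_nonneg (Real.rpow_nonneg (hpos₁ τ u ω).le _) (Real.rpow_nonneg (hpos₂ u t ω).le _)) hu₀
  calc _ ≤ ∫ ω, ∑ u ∈ Icc τ t, S₁ τ u ω ^ (s - 1) * S₂ u t ω ^ (s - 1) ∂P := hmono
    _ = ∑ u ∈ Icc τ t, ∫ ω, S₁ τ u ω ^ (s - 1) * S₂ u t ω ^ (s - 1) ∂P :=
        integral_finset_sum _ fun u _ => hintmul u
    _ = ∑ u ∈ Icc τ t, (∫ ω, S₁ τ u ω ^ (s - 1) ∂P) * (∫ ω, S₂ u t ω ^ (s - 1) ∂P) :=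
        Finset.sum_congr rfl fun u _ => (hindep' u).integral_fun_mul_eq_mul_integral (hint₁ u).1 (hint₂ u).1
end

section
/- Let S₁,...,S_H be i.i.d. processes with S_j(τ,t) = ∏_{u=τ}^{t−1} g_u^{(j)} where the g_u^{(j)} are i.i.d. positive random variables with Mellin transform M(s) = E[g^{s−1}]. Then for s < 1, the Mellin transform of the (min,×) network convolution S_net = S₁ ⊗ ⋯ ⊗ S_H satisfies E[S_net(τ,t)^{s−1}] ≤ C(H−1+t−τ, t−τ) · M(s)^{t−τ}, where C(·,·) is the binomial coefficient. -/
open MeasureTheory ProbabilityTheory Finset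

theorem network_convolution_mellin_bound
    {Ω : Type*} [MeasurableSpace Ω] (P : Measure Ω) [IsProbabilityMeasure P]
    (H : ℕ) (hH : 1 ≤ H) (g : Fin H → ℕ → Ω → ℝ)
    (hmeas : ∀ j v, Measurable (g j v)) (hpos : ∀ j v ω, 0 < g j v ω)
    (hindep : iIndepFun (fun p : Fin H × ℕ => g p.1 p.2) P)
    (s : ℝ) (hs : s < 1) (M : ℝ)
    (hint : ∀ j v, Integrable (fun ω => g j v ω ^ (s - 1)) P)
    (hMellin : ∀ j v, ∫ ω, g j v ω ^ (s - 1) ∂P = M)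
    (τ t : ℕ) (hτt : τ ≤ t) :
    ∫ ω,
        (⨅ u : {u : Fin (H + 1) → ℕ // Monotone u ∧ u 0 = τ ∧ u (Fin.last H) = t},
            ∏ j : Fin H, ∏ v ∈ Ico (u.1 j.castSucc) (u.1 j.succ), g j v ω) ^ (s - 1) ∂P
      ≤ (H - 1 + (t - τ)).choose (t - τ) * M ^ (t - τ) := by
  classical
  set n := t - τ with hn
  set ι := {u : Fin (H + 1) → ℕ // Monotone u ∧ u 0 = τ ∧ u (Fin.last H) = t} with hι
  let F : ι → Ω → ℝ := fun u ω =>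
    ∏ j : Fin H, ∏ v ∈ Ico (u.1 j.castSucc) (u.1 j.succ), g j v ω
  let d : ι → Fin H → ℕ := fun u j => u.1 j.succ - u.1 j.castSucc
  -- telescoping sum of differences
  have hsum : ∀ u : ι, ∑ j : Fin H, d u j = n := by
    intro u
    let w : ℕ → ℕ := fun i => u.1 ⟨min i H, Nat.lt_succ_of_le (min_le_right i H)⟩
    have hw : Monotone w := by
      intro a b hab
      exact u.2.1 (by simp only [Fin.mk_le_mk]; exact min_le_min hab le_rfl)
    have h1 : ∀ j : Fin H, d u j = w (j.1 + 1) - w j.1 := by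
      intro j
      have e1 : w (j.1 + 1) = u.1 j.succ :=
        congrArg u.1 (Fin.ext (by simp only [Fin.val_succ]; have := j.2; omega))
      have e2 : w j.1 = u.1 j.castSucc :=
        congrArg u.1 (Fin.ext (by simp only [Fin.coe_castSucc]; have := j.2; omega))
      simp [d, e1, e2]
    have hH0 : w H = t := by
      show u.1 _ = t
      have : (⟨min H H, Nat.lt_succ_of_le (min_le_right H H)⟩ : Fin (H + 1)) = Fin.last H := by
        apply Fin.ext; simp [Fin.val_last]
      rw [this, u.2.2.2]
    have h00 : w 0 = τ := by
      show u.1 _ = τ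
      have : (⟨min 0 H, Nat.lt_succ_of_le (min_le_right 0 H)⟩ : Fin (H + 1)) = 0 := by
        apply Fin.ext; simp
      rw [this, u.2.2.1]
    calc ∑ j : Fin H, d u j = ∑ j : Fin H, (w (j.1 + 1) - w j.1) :=
          Finset.sum_congr rfl fun j _ => h1 j
      _ = ∑ i ∈ Finset.range H, (w (i + 1) - w i) :=
          Fin.sum_univ_eq_sum_range (fun i => w (i + 1) - w i) H
      _ = w H - w 0 := Finset.sum_range_tsub hw H
      _ = n := by rw [hH0, h00]
  -- nonemptiness
  have hne : Nonempty ι := by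
    have h0last : (0 : Fin (H + 1)) ≠ Fin.last H := by
      simp only [ne_eq, Fin.ext_iff, Fin.val_last, Fin.val_zero]
      omega
    refine ⟨⟨fun j => if j = Fin.last H then t else τ, ?_, ?_, ?_⟩⟩
    · intro a b hab
      by_cases hb : b = Fin.last H
      · subst hb
        by_cases ha : a = Fin.last H <;> simp [ha, hτt]
      · have ha : a ≠ Fin.last H := by
          rintro rfl
          exact hb (le_antisymm (Fin.le_last b) hab)
        simp [ha, hb]
    · simp [h0last]
    · simp
  haveI := hne
  -- card of a finite sum of multisets
  have hms : ∀ (sf : Finset (Fin H)) (f : Fin H → Multiset (Fin H)),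
      Multiset.card (∑ j ∈ sf, f j) = ∑ j ∈ sf, Multiset.card (f j) := by
    intro sf f
    induction sf using Finset.induction_on with
    | empty => simp
    | @insert a sf ha ih => rw [Finset.sum_insert ha, Finset.sum_insert ha,
        Multiset.card_add, ih]
  -- injection into Sym (Fin H) n
  let Φ : ι → Sym (Fin H) n := fun u =>
    ⟨∑ j : Fin H, Multiset.replicate (d u j) j, by
      rw [hms]
      simpa [Multiset.card_replicate] using hsum u⟩
  have hΦ : Function.Injective Φ := by
    intro u u' h
    have hd : ∀ j, d u j = d u' j := by
      intro j
      have h2 := congrArg (fun z : Sym (Fin H) n => Multiset.count j z.1) h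
      simpa [Φ, Multiset.count_sum', Multiset.count_replicate] using h2
    apply Subtype.ext
    funext j
    induction j using Fin.induction with
    | zero => rw [u.2.2.1, u'.2.2.1]
    | succ i ih =>
        have e1 : u.1 i.succ = u.1 i.castSucc + d u i :=
          (Nat.add_sub_cancel' (u.2.1 (Fin.castSucc_le_succ i))).symm
        have e2 : u'.1 i.succ = u'.1 i.castSucc + d u' i :=
          (Nat.add_sub_cancel' (u'.2.1 (Fin.castSucc_le_succ i))).symm
        rw [e1, e2, ih, hd i]
  haveI : Fintype ι := Fintype.ofInjective Φ hΦ
  have hcard : Fintype.card ι ≤ (H - 1 + n).choose n := by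
    have h1 := Fintype.card_le_of_injective Φ hΦ
    rw [Sym.card_sym_eq_multichoose, Fintype.card_fin, Nat.multichoose_eq] at h1
    have : H + n - 1 = H - 1 + n := by omega
    rwa [this] at h1
  -- M is nonneg
  have hM0 : 0 ≤ M := by
    rw [← hMellin ⟨0, hH⟩ 0]
    exact integral_nonneg fun ω => Real.rpow_nonneg (hpos _ _ ω).le _
  -- the index set of factors
  let T : ι → Finset (Fin H × ℕ) := fun u =>
    univ.biUnion fun j : Fin H =>
      (Ico (u.1 j.castSucc) (u.1 j.succ)).image fun v => (j, v)
  have hTdisj : ∀ u : ι, (↑(univ : Finset (Fin H)) : Set (Fin H)).PairwiseDisjoint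
      (fun j : Fin H => (Ico (u.1 j.castSucc) (u.1 j.succ)).image fun v => (j, v)) := by
    intro u a _ b _ hab
    rw [Function.onFun, Finset.disjoint_left]
    rintro ⟨j, v⟩ h1 h2
    simp only [Finset.mem_image, Prod.mk.injEq] at h1 h2
    obtain ⟨v1, _, rfl, _⟩ := h1
    obtain ⟨v2, _, rfl, _⟩ := h2
    exact hab rfl
  have hFT : ∀ (u : ι) (ω : Ω), F u ω = ∏ p ∈ T u, g p.1 p.2 ω := by
    intro u ω
    rw [Finset.prod_biUnion (hTdisj u)]
    refine Finset.prod_congr rfl fun j _ => ?_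
    rw [Finset.prod_image]
    intro a _ b _ hab
    simpa using congrArg Prod.snd hab
  have hTcard : ∀ u : ι, (T u).card = n := by
    intro u
    rw [Finset.card_biUnion
      (fun a ha b hb hab => hTdisj u (by simp) (by simp) hab)]
    have : ∀ j : Fin H,
        ((Ico (u.1 j.castSucc) (u.1 j.succ)).image fun v => (j, v)).card = d u j := by
      intro j
      rw [Finset.card_image_of_injective _ (fun a b hab => by simpa using congrArg Prod.snd hab)]
      simp [d]
    rw [Finset.sum_congr rfl fun j _ => this j]
    exact hsum u
  -- integral of products over arbitrary finite sets of factors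
  have key : ∀ T' : Finset (Fin H × ℕ),
      Integrable (fun ω => ∏ p ∈ T', g p.1 p.2 ω ^ (s - 1)) P ∧
      ∫ ω, ∏ p ∈ T', g p.1 p.2 ω ^ (s - 1) ∂P = M ^ T'.card := by
    intro T'
    induction T' using Finset.induction_on with
    | empty => simp [integrable_const]
    | @insert p T' hp ih =>
        have hcomp : iIndepFun
            (fun q : Fin H × ℕ => fun ω => g q.1 q.2 ω ^ (s - 1)) P :=
          hindep.comp (fun _ => fun x : ℝ => x ^ (s - 1))
            (fun _ => measurable_id.pow_const _)
        have hindep2 : IndepFun (fun ω => ∏ q ∈ T', g q.1 q.2 ω ^ (s - 1))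
            (fun ω => g p.1 p.2 ω ^ (s - 1)) P := by
          have h3 := hcomp.indepFun_finsetProd_of_notMem
            (fun q => (hmeas q.1 q.2).pow_const _) hp
          convert h3 using 1
          funext ω
          simp
        have heq : (fun ω => ∏ q ∈ insert p T', g q.1 q.2 ω ^ (s - 1)) =
            fun ω => (∏ q ∈ T', g q.1 q.2 ω ^ (s - 1)) * g p.1 p.2 ω ^ (s - 1) := by
          funext ω
          rw [Finset.prod_insert hp, mul_comm]
        constructor
        · rw [heq]
          exact hindep2.integrable_mul ih.1 (hint p.1 p.2)
        · rw [heq, Finset.card_insert_of_notMem hp, pow_succ, ← ih.2,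
            ← hMellin p.1 p.2]
          exact hindep2.integral_fun_mul_eq_mul_integral ih.1.1 (hint p.1 p.2).1
  have hFint : ∀ u : ι, Integrable (fun ω => F u ω ^ (s - 1)) P ∧
      ∫ ω, F u ω ^ (s - 1) ∂P = M ^ n := by
    intro u
    have heq : (fun ω => F u ω ^ (s - 1)) =
        fun ω => ∏ p ∈ T u, g p.1 p.2 ω ^ (s - 1) := by
      funext ω
      rw [hFT u ω, ← Real.finset_prod_rpow _ _ (fun p _ => (hpos p.1 p.2 ω).le) _]
    rw [heq]
    exact ⟨(key (T u)).1, by rw [(key (T u)).2, hTcard u]⟩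
  -- pointwise bound
  have hFposAll : ∀ (u : ι) (ω : Ω), 0 ≤ F u ω := fun u ω =>
    Finset.prod_nonneg fun j _ => Finset.prod_nonneg fun v _ => (hpos j v ω).le
  have hpt : ∀ ω, (⨅ u : ι, F u ω) ^ (s - 1) ≤ ∑ u : ι, F u ω ^ (s - 1) := by
    intro ω
    obtain ⟨u₀, -, hu₀⟩ := Finset.exists_min_image (univ : Finset ι)
      (fun u => F u ω) ⟨Classical.arbitrary ι, mem_univ _⟩
    have hmin : (⨅ u : ι, F u ω) = F u₀ ω :=
      le_antisymm (ciInf_le (Set.Finite.bddBelow (Set.finite_range _)) u₀)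
        (le_ciInf fun u => hu₀ u (mem_univ u))
    rw [hmin]
    exact Finset.single_le_sum
      (fun u _ => Real.rpow_nonneg (hFposAll u ω) _) (mem_univ u₀)
  show ∫ ω, (⨅ u : ι, F u ω) ^ (s - 1) ∂P ≤ ((H - 1 + n).choose n : ℝ) * M ^ n
  have step1 : ∫ ω, (⨅ u : ι, F u ω) ^ (s - 1) ∂P
      ≤ ∫ ω, ∑ u : ι, F u ω ^ (s - 1) ∂P := by
    refine integral_mono_of_nonneg (ae_of_all _ fun ω => ?_)
      (integrable_finset_sum _ fun u _ => (hFint u).1) (ae_of_all _ hpt)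
    exact Real.rpow_nonneg (le_ciInf fun u => hFposAll u ω) _
  refine step1.trans ?_
  rw [integral_finset_sum _ fun u _ => (hFint u).1,
    Finset.sum_congr rfl fun u _ => (hFint u).2, Finset.sum_const, card_univ,
    nsmul_eq_mul]
  exact mul_le_mul_of_nonneg_right (Nat.cast_le.mpr hcard) (pow_nonneg hM0 n)
end
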